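/- Let 1 < α < ∞ and let ρ be a density matrix on ℂ^{d_A} ⊗ ℂ^{d_B} with marginals ρ_A, ρ_B. Then ‖ρ_A‖_α + ‖ρ_B‖_α = 1 + ‖ρ‖_α holds if and only if ρ_A is pure or ρ_B is pure (i.e. at least one of ρ_A, ρ_B has rank 1). -/

import Mathlib

noncomputable section
open scoped ComplexOrder Kronecker

/-- A density matrix: positive semidefinite with unit trace. -/
def IsDensityMatrix {ι : Type*} [Fintype ι] (ρ : Matrix ι ι ℂ) : Prop :=
  ρ.PosSemidef ∧ ρ.trace = 1

/-- Marginal on system `A` of a bipartite matrix. -/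
def margA {dA dB : ℕ} (ρ : Matrix (Fin dA × Fin dB) (Fin dA × Fin dB) ℂ) :
    Matrix (Fin dA) (Fin dA) ℂ :=
  fun a a' => ∑ b, ρ (a, b) (a', b)

/-- Marginal on system `B` of a bipartite matrix. -/
def margB {dA dB : ℕ} (ρ : Matrix (Fin dA × Fin dB) (Fin dA × Fin dB) ℂ) :
    Matrix (Fin dB) (Fin dB) ℂ :=
  fun b b' => ∑ a, ρ (a, b) (a, b')


/-- Schatten α-norm of a (Hermitian, PSD) matrix, via its eigenvalues. -/
def schattenNorm {ι : Type*} [Fintype ι] [DecidableEq ι] (α : ℝ)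
    (σ : Matrix ι ι ℂ) : ℝ :=
  if h : σ.IsHermitian then (∑ i, h.eigenvalues i ^ α) ^ (1 / α) else 0

/-- Operator (∞-Schatten) norm of a (Hermitian, PSD) matrix: its largest eigenvalue. -/
def schattenInftyNorm {ι : Type*} [Fintype ι] [DecidableEq ι]
    (σ : Matrix ι ι ℂ) : ℝ :=
  if h : σ.IsHermitian then ⨆ i, h.eigenvalues i else 0



section AudHelpers
open Matrix Finset

section Comm
variable {A B : Type*} [Fintype A] [Fintype B]




variable {A B : Type*} [Fintype A] [Fintype B]

lemma aud_jensen_rpow {P K : Type*} [Fintype P] [Fintype K] {α : ℝ} (hα : 1 ≤ α)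
    (Bm : P → K → ℝ) (hB : ∀ p k, 0 ≤ Bm p k)
    (hrow : ∀ p, ∑ k, Bm p k = 1) (hcol : ∀ k, ∑ p, Bm p k ≤ 1)
    (e : K → ℝ) (he : ∀ k, 0 ≤ e k) :
    ∑ p, (∑ k, Bm p k * e k) ^ α ≤ ∑ k, e k ^ α := by
  have step : ∀ p, (∑ k, Bm p k * e k) ^ α ≤ ∑ k, Bm p k * e k ^ α := fun p =>
    Real.rpow_arith_mean_le_arith_mean_rpow univ (Bm p) e (fun k _ => hB p k)
      (hrow p) (fun k _ => he k) hα
  calc ∑ p, (∑ k, Bm p k * e k) ^ α ≤ ∑ p, ∑ k, Bm p k * e k ^ α :=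
        sum_le_sum fun p _ => step p
    _ = ∑ k, (∑ p, Bm p k) * e k ^ α := by rw [Finset.sum_comm]; simp [Finset.sum_mul]
    _ ≤ ∑ k, e k ^ α := by
        refine sum_le_sum fun k _ => ?_
        have h1 : (0:ℝ) ≤ e k ^ α := Real.rpow_nonneg (he k) _
        nlinarith [hcol k]

lemma aud_pure_of_eq {α : ℝ} (hα : 1 < α) {C : Type*} [Fintype C] (lam : C → ℝ)
    (h0 : ∀ c, 0 ≤ lam c) (h1 : ∑ c, lam c = 1) (c : C)
    (hc : lam c ^ α = ∑ c', lam c' ^ α) : lam c = 1 := by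
  classical
  have hαne : α ≠ 0 := by positivity
  have hz : ∀ c' ≠ c, lam c' = 0 := by
    have hzero : ∑ c' ∈ univ.erase c, lam c' ^ α = 0 := by
      have h4 : ∑ c' ∈ univ.erase c, lam c' ^ α = (∑ c', lam c' ^ α) - lam c ^ α :=
        Finset.sum_erase_eq_sub (mem_univ c)
      rw [h4, ← hc]; ring
    intro c' hc'
    have h2 : lam c' ^ α = 0 := by
      have hnn : ∀ i ∈ univ.erase c, 0 ≤ lam i ^ α := fun i _ => Real.rpow_nonneg (h0 i) _
      exact (Finset.sum_eq_zero_iff_of_nonneg hnn).1 hzero c' (by simp [hc'])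
    exact (Real.rpow_eq_zero (h0 c') hαne).1 h2
  have h4 : ∑ c' ∈ univ.erase c, lam c' = 0 :=
    Finset.sum_eq_zero fun c' hc' => hz c' (Finset.ne_of_mem_erase hc')
  have h5 : ∑ c' ∈ univ.erase c, lam c' = (∑ c', lam c') - lam c :=
    Finset.sum_erase_eq_sub (mem_univ c)
  rw [h4, h1] at h5
  linarith

lemma aud_dual_vector {α : ℝ} (hα : 1 < α) {C : Type*} [Fintype C] (lam : C → ℝ)
    (h0 : ∀ c, 0 ≤ lam c) (h1 : ∑ c, lam c = 1) :
    ∃ s : C → ℝ, (∀ c, 0 ≤ s c) ∧ (∀ c, s c ≤ 1) ∧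
      (∑ c, lam c * s c = (∑ c, lam c ^ α) ^ (1/α)) ∧
      (∑ c, s c ^ α.conjExponent = 1) ∧
      (∀ c, s c = 1 → lam c = 1) := by
  have hα0 : (0:ℝ) < α := lt_trans one_pos hα
  have hα1 : (0:ℝ) < α - 1 := by linarith
  have hαne : α ≠ 0 := ne_of_gt hα0
  have hpq : α.HolderConjugate α.conjExponent := Real.HolderConjugate.conjExponent hα
  set SA := ∑ c, lam c ^ α with hSAdef
  have hSA0 : 0 < SA := by
    obtain ⟨c, hc⟩ : ∃ c, 0 < lam c := by
      by_contra h
      push_neg at h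
      have : ∑ c, lam c = 0 :=
        Finset.sum_eq_zero fun c _ => le_antisymm (h c) (h0 c)
      rw [this] at h1; norm_num at h1
    have h2 : 0 < lam c ^ α := Real.rpow_pos_of_pos hc _
    have h3 : lam c ^ α ≤ SA :=
      Finset.single_le_sum (f := fun c => lam c ^ α)
        (fun i _ => Real.rpow_nonneg (h0 i) _) (mem_univ c)
    linarith
  set NA := SA ^ (1/α) with hNAdef
  have hNA0 : 0 < NA := Real.rpow_pos_of_pos hSA0 _
  have hNApow : NA ^ α = SA := by
    rw [hNAdef, ← Real.rpow_mul hSA0.le, one_div_mul_cancel hαne, Real.rpow_one]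
  have hlamle : ∀ c, lam c ≤ NA := by
    intro c
    have h3 : lam c ^ α ≤ NA ^ α := by
      rw [hNApow]
      exact Finset.single_le_sum (f := fun c => lam c ^ α)
        (fun i _ => Real.rpow_nonneg (h0 i) _) (mem_univ c)
    calc lam c = (lam c ^ α) ^ (1/α) := by
          rw [← Real.rpow_mul (h0 c), mul_one_div_cancel hαne, Real.rpow_one]
      _ ≤ (NA ^ α) ^ (1/α) :=
          Real.rpow_le_rpow (Real.rpow_nonneg (h0 c) _) h3 (by positivity)
      _ = NA := by rw [← Real.rpow_mul hNA0.le, mul_one_div_cancel hαne, Real.rpow_one]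
  refine ⟨fun c => (lam c / NA) ^ (α - 1),
    fun c => Real.rpow_nonneg (div_nonneg (h0 c) hNA0.le) _,
    fun c => Real.rpow_le_one (div_nonneg (h0 c) hNA0.le)
      (div_le_one_of_le₀ (hlamle c) hNA0.le) hα1.le,
    ?_, ?_, ?_⟩
  · have hterm : ∀ c, lam c * (lam c / NA) ^ (α - 1) = lam c ^ α / NA ^ (α - 1) := by
      intro c
      rw [Real.div_rpow (h0 c) hNA0.le, mul_div_assoc']
      congr 1
      rw [← Real.rpow_one_add' (h0 c) (by linarith : 1 + (α - 1) ≠ 0)]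
      norm_num
    simp_rw [hterm]
    rw [← Finset.sum_div, ← hSAdef, ← hNApow, ← Real.rpow_sub hNA0]
    norm_num
  · have hterm : ∀ c, ((lam c / NA) ^ (α - 1)) ^ α.conjExponent = lam c ^ α / NA ^ α := by
      intro c
      rw [← Real.rpow_mul (div_nonneg (h0 c) hNA0.le), hpq.sub_one_mul_conj,
        Real.div_rpow (h0 c) hNA0.le]
    simp_rw [hterm]
    rw [← Finset.sum_div, ← hSAdef, hNApow, div_self hSA0.ne']
  · intro c hc
    have hc' : (lam c / NA) ^ (α - 1) = 1 := hc
    have hle : lam c / NA ≤ 1 := div_le_one_of_le₀ (hlamle c) hNA0.le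
    have heq1 : lam c / NA = 1 := by
      by_contra h
      have hlt : lam c / NA < 1 := lt_of_le_of_ne hle h
      have := Real.rpow_lt_one (div_nonneg (h0 c) hNA0.le) hlt hα1
      rw [hc'] at this; norm_num at this
    have hNAeq : lam c = NA := by
      field_simp at heq1; linarith
    refine aud_pure_of_eq hα lam h0 h1 c ?_
    rw [hNAeq, hNApow]



lemma aud_comm_core {α : ℝ} (hα : 1 < α)
    (r : A → B → ℝ) (hr : ∀ a b, 0 ≤ r a b)
    {lam : A → ℝ} {mu : B → ℝ}
    (hlam : ∀ a, (∑ b, r a b) = lam a) (hmu : ∀ b, (∑ a, r a b) = mu b)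
    (hsum : ∑ a, lam a = 1) {R : ℝ} (hR0 : 0 ≤ R)
    (hR : (∑ p : A × B, r p.1 p.2 ^ α) ^ (1/α) ≤ R) :
    (∑ a, lam a ^ α) ^ (1/α) + (∑ b, mu b ^ α) ^ (1/α) ≤ 1 + R
    ∧ ((∑ a, lam a ^ α) ^ (1/α) + (∑ b, mu b ^ α) ^ (1/α) = 1 + R →
       (∃ a, lam a = 1) ∨ ∃ b, mu b = 1) := by
  have hα0 : (0:ℝ) < α := lt_trans one_pos hα
  have hαne : α ≠ 0 := ne_of_gt hα0
  have hpq : α.HolderConjugate α.conjExponent := Real.HolderConjugate.conjExponent hα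
  set q : ℝ := α.conjExponent with hqdef
  have hlam0 : ∀ a, 0 ≤ lam a := fun a => (hlam a) ▸ Finset.sum_nonneg fun b _ => hr a b
  have hmu0 : ∀ b, 0 ≤ mu b := fun b => (hmu b) ▸ Finset.sum_nonneg fun a _ => hr a b
  have hmusum : ∑ b, mu b = 1 := by
    rw [← hsum, show ∑ b, mu b = ∑ b, ∑ a, r a b from by simp [hmu], Finset.sum_comm]
    simp [hlam]
  obtain ⟨s, hs0, hs1, hsA, hsq, hspure⟩ := aud_dual_vector hα lam hlam0 hsum
  obtain ⟨t, ht0, ht1, htB, htq, htpure⟩ := aud_dual_vector hα mu hmu0 hmusum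
  -- identity: ∑_{a,b} r (s a + t b) = NA + NB
  have hS1 : ∑ p : A × B, r p.1 p.2 * (s p.1 + t p.2)
      = (∑ a, lam a ^ α) ^ (1/α) + (∑ b, mu b ^ α) ^ (1/α) := by
    rw [← hsA, ← htB]
    rw [Fintype.sum_prod_type]
    simp_rw [mul_add, Finset.sum_add_distrib]
    congr 1
    · simp_rw [← Finset.sum_mul, hlam]
    · rw [Finset.sum_comm (f := fun a b => r a b * t b)]
      simp_rw [← Finset.sum_mul, hmu]
  -- identity : ∑ r = 1
  have hrsum : ∑ p : A × B, r p.1 p.2 = 1 := by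
    rw [Fintype.sum_prod_type]; simp_rw [hlam]; exact hsum
  -- Hölder
  have hstq : ∑ p : A × B, (s p.1 * t p.2) ^ q = 1 := by
    rw [Fintype.sum_prod_type]
    simp_rw [Real.mul_rpow (hs0 _) (ht0 _)]
    rw [← Finset.sum_mul_sum, hsq, htq, mul_one]
  have holder : ∑ p : A × B, r p.1 p.2 * (s p.1 * t p.2)
      ≤ (∑ p : A × B, r p.1 p.2 ^ α) ^ (1/α) := by
    have h := Real.inner_le_Lp_mul_Lq (univ : Finset (A × B))
      (fun p => r p.1 p.2) (fun p => s p.1 * t p.2) hpq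
    simp_rw [abs_of_nonneg (hr _ _), abs_of_nonneg (mul_nonneg (hs0 _) (ht0 _))] at h
    rw [hstq, Real.one_rpow, mul_one] at h
    exact h
  -- pointwise
  have hpt : ∀ p : A × B, r p.1 p.2 * (s p.1 + t p.2)
      ≤ r p.1 p.2 * (1 + s p.1 * t p.2) := by
    intro p
    have h1 : s p.1 + t p.2 ≤ 1 + s p.1 * t p.2 := by nlinarith [hs1 p.1, ht1 p.2, hs0 p.1, ht0 p.2]
    exact mul_le_mul_of_nonneg_left h1 (hr _ _)
  have hS2 : ∑ p : A × B, r p.1 p.2 * (1 + s p.1 * t p.2)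
      = 1 + ∑ p : A × B, r p.1 p.2 * (s p.1 * t p.2) := by
    simp_rw [mul_add, mul_one, Finset.sum_add_distrib, hrsum]
  have hchain : (∑ a, lam a ^ α) ^ (1/α) + (∑ b, mu b ^ α) ^ (1/α) ≤ 1 + R := by
    calc (∑ a, lam a ^ α) ^ (1/α) + (∑ b, mu b ^ α) ^ (1/α)
        = ∑ p : A × B, r p.1 p.2 * (s p.1 + t p.2) := hS1.symm
      _ ≤ ∑ p : A × B, r p.1 p.2 * (1 + s p.1 * t p.2) := sum_le_sum fun p _ => hpt p
      _ = 1 + ∑ p : A × B, r p.1 p.2 * (s p.1 * t p.2) := hS2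
      _ ≤ 1 + (∑ p : A × B, r p.1 p.2 ^ α) ^ (1/α) := by linarith [holder]
      _ ≤ 1 + R := by linarith [hR]
  refine ⟨hchain, fun heq => ?_⟩
  -- equality forces the middle inequality to be equality
  have hmid : ∑ p : A × B, r p.1 p.2 * (s p.1 + t p.2)
      = ∑ p : A × B, r p.1 p.2 * (1 + s p.1 * t p.2) := by
    have h1 : ∑ p : A × B, r p.1 p.2 * (s p.1 + t p.2)
        ≤ ∑ p : A × B, r p.1 p.2 * (1 + s p.1 * t p.2) := sum_le_sum fun p _ => hpt p
    have h2 : ∑ p : A × B, r p.1 p.2 * (1 + s p.1 * t p.2) ≤ 1 + R := by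
      rw [hS2]; linarith [holder, hR]
    rw [hS1, heq] at h1 ⊢
    linarith
  have hzero : ∀ p : A × B, r p.1 p.2 * ((1 - s p.1) * (1 - t p.2)) = 0 := by
    have hsum0 : ∑ p : A × B, r p.1 p.2 * ((1 - s p.1) * (1 - t p.2)) = 0 := by
      have : ∀ p : A × B, r p.1 p.2 * ((1 - s p.1) * (1 - t p.2))
          = r p.1 p.2 * (1 + s p.1 * t p.2) - r p.1 p.2 * (s p.1 + t p.2) := by
        intro p; ring
      simp_rw [this, Finset.sum_sub_distrib, hmid, sub_self]
    intro p
    have hnn : ∀ p ∈ (univ : Finset (A × B)), 0 ≤ r p.1 p.2 * ((1 - s p.1) * (1 - t p.2)) :=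
      fun p _ => mul_nonneg (hr _ _)
        (mul_nonneg (by linarith [hs1 p.1]) (by linarith [ht1 p.2]))
    exact (Finset.sum_eq_zero_iff_of_nonneg hnn).1 hsum0 p (mem_univ p)
  by_cases hs : ∃ a, s a = 1
  · exact Or.inl ⟨hs.choose, hspure _ hs.choose_spec⟩
  by_cases ht : ∃ b, t b = 1
  · exact Or.inr ⟨ht.choose, htpure _ ht.choose_spec⟩
  push_neg at hs ht
  exfalso
  have hrz : ∀ p : A × B, r p.1 p.2 = 0 := by
    intro p
    have h1 : 1 - s p.1 > 0 := by
      have := lt_of_le_of_ne (hs1 p.1) (hs p.1); linarith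
    have h2 : 1 - t p.2 > 0 := by
      have := lt_of_le_of_ne (ht1 p.2) (ht p.2); linarith
    have := hzero p
    rcases mul_eq_zero.1 this with h | h
    · exact h
    · exact absurd h (mul_pos h1 h2).ne'
  rw [Finset.sum_eq_zero (fun p _ => hrz p)] at hrsum
  norm_num at hrsum


end Comm

section Mat
variable {n : Type*} [Fintype n] [DecidableEq n]

lemma aud_diag_entry (ρ : Matrix n n ℂ) (p : n) :
    star (Pi.single p 1) ⬝ᵥ ρ *ᵥ (Pi.single p (1:ℂ)) = ρ p p := by
  simp [dotProduct, mulVec, Pi.single_apply]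

lemma aud_psd_diag_nonneg {ρ : Matrix n n ℂ} (h : ρ.PosSemidef) (p : n) :
    0 ≤ (ρ p p).re ∧ (ρ p p) = ((ρ p p).re : ℂ) := by
  have h2 := h.dotProduct_mulVec_nonneg (Pi.single p 1)
  rw [aud_diag_entry] at h2
  rw [Complex.nonneg_iff] at h2
  exact ⟨h2.1, Complex.ext (by simp) (by simp [← h2.2])⟩

lemma aud_psd_row_zero {ρ : Matrix n n ℂ} (h : ρ.PosSemidef) {p : n}
    (hp : ρ p p = 0) (q : n) : ρ q p = 0 ∧ ρ p q = 0 := by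
  have h2 : ρ *ᵥ (Pi.single p 1) = 0 := by
    rw [← h.dotProduct_mulVec_zero_iff, aud_diag_entry, hp]
  have h3 : ρ q p = 0 := by
    have := congrFun h2 q
    simpa [mulVec, dotProduct, Pi.single_apply] using this
  exact ⟨h3, by rw [← h.1.apply, h3, star_zero]⟩

lemma aud_trace_eq_sum_eigenvalues {ρ : Matrix n n ℂ} (h : ρ.IsHermitian) :
    ρ.trace = ∑ k, (h.eigenvalues k : ℂ) := by
  conv_lhs => rw [h.spectral_theorem, Unitary.conjStarAlgAut_apply]
  rw [Matrix.trace_mul_cycle]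
  have hU : star (h.eigenvectorUnitary : Matrix n n ℂ) * (h.eigenvectorUnitary : Matrix n n ℂ) = 1 :=
    Matrix.mem_unitaryGroup_iff'.mp h.eigenvectorUnitary.2
  rw [hU, one_mul, Matrix.trace_diagonal]
  simp

lemma aud_conj_diag_entry (N : Matrix n n ℂ) (c : n → ℝ) (p : n) :
    ((N * Matrix.diagonal (fun k => (c k : ℂ)) * Nᴴ) p p)
      = ((∑ k, Complex.normSq (N p k) * c k : ℝ) : ℂ) := by
  rw [Matrix.mul_apply]
  push_cast
  congr 1
  ext k
  rw [Matrix.mul_apply, Finset.sum_mul]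
  rw [Finset.sum_eq_single k (by intro b _ hb; simp [Matrix.diagonal_apply_ne _ hb]) (by simp)]
  simp [Matrix.diagonal_apply_eq, Matrix.conjTranspose_apply]
  rw [show N p k * (c k : ℂ) * (starRingEnd ℂ) (N p k)
      = (N p k * (starRingEnd ℂ) (N p k)) * (c k : ℂ) by ring, Complex.mul_conj]


lemma aud_rowsum {M : Matrix n n ℂ} (h : M * Mᴴ = 1) (p : n) :
    ∑ k, Complex.normSq (M p k) = 1 := by
  have h0 := congrFun (congrFun h p) p
  rw [Matrix.mul_apply] at h0
  have h2 : ∀ k, M p k * Mᴴ k p = (Complex.normSq (M p k) : ℂ) := by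
    intro k
    rw [Matrix.conjTranspose_apply, Complex.star_def, Complex.mul_conj]
  simp_rw [h2] at h0
  rw [Matrix.one_apply_eq] at h0
  exact_mod_cast (by push_cast at h0 ⊢; exact h0 :
    ((∑ k, Complex.normSq (M p k) : ℝ) : ℂ) = 1)

lemma aud_colsum {M : Matrix n n ℂ} (h : Mᴴ * M = 1) (k : n) :
    ∑ p, Complex.normSq (M p k) = 1 := by
  have h1 : Mᴴ * (Mᴴ)ᴴ = 1 := by rwa [Matrix.conjTranspose_conjTranspose]
  have := aud_rowsum h1 k
  simpa [Matrix.conjTranspose_apply, Complex.star_def, Complex.normSq_conj] using this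

/-- If `ρ = M diag(d) Mᴴ` with `M` unitary and `d ≥ 0`, then for any `α ≥ 1`,
`∑ eig^α = ∑ d^α`. -/
lemma aud_sum_rpow_eigenvalues {α : ℝ} (hα : 1 ≤ α)
    {ρ : Matrix n n ℂ} (hher : ρ.IsHermitian)
    (M : Matrix n n ℂ) (hM1 : Mᴴ * M = 1) (hM2 : M * Mᴴ = 1)
    (d : n → ℝ) (hd : ∀ p, 0 ≤ d p)
    (hρ : ρ = M * Matrix.diagonal (fun p => (d p : ℂ)) * Mᴴ) :
    ∑ k, hher.eigenvalues k ^ α = ∑ p, d p ^ α := by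
  have hpsd : ρ.PosSemidef := by
    rw [hρ]
    have hdpos : (0 : n → ℂ) ≤ fun p => ((d p : ℝ) : ℂ) := by
      intro p
      simp only [Pi.zero_apply]
      exact_mod_cast hd p
    exact (Matrix.PosSemidef.diagonal hdpos).mul_mul_conjTranspose_same M
  have he0 : ∀ k, 0 ≤ hher.eigenvalues k := fun k => hpsd.eigenvalues_nonneg k
  set W : Matrix n n ℂ := (hher.eigenvectorUnitary : Matrix n n ℂ) with hW
  have hW1 : Wᴴ * W = 1 := by
    rw [← Matrix.star_eq_conjTranspose]
    exact Matrix.mem_unitaryGroup_iff'.mp hher.eigenvectorUnitary.2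
  have hW2 : W * Wᴴ = 1 := by
    rw [← Matrix.star_eq_conjTranspose]
    exact Matrix.mem_unitaryGroup_iff.mp hher.eigenvectorUnitary.2
  set N : Matrix n n ℂ := Wᴴ * M with hN
  have hN1 : Nᴴ * N = 1 := by
    rw [hN, Matrix.conjTranspose_mul, Matrix.conjTranspose_conjTranspose]
    calc Mᴴ * W * (Wᴴ * M) = Mᴴ * (W * Wᴴ) * M := by
          simp only [Matrix.mul_assoc]
      _ = 1 := by rw [hW2, Matrix.mul_one, hM1]
  have hN2 : N * Nᴴ = 1 := by
    rw [hN, Matrix.conjTranspose_mul, Matrix.conjTranspose_conjTranspose]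
    calc Wᴴ * M * (Mᴴ * W) = Wᴴ * (M * Mᴴ) * W := by
          simp only [Matrix.mul_assoc]
      _ = 1 := by rw [hM2, Matrix.mul_one, hW1]
  -- row and column sums of |N|²
  have hrow : ∀ k, ∑ p, Complex.normSq (N k p) = 1 := by
    intro k
    have := congrFun (congrFun hN2 k) k
    rw [Matrix.mul_apply] at this
    have h2 : ∀ p, N k p * Nᴴ p k = (Complex.normSq (N k p) : ℂ) := by
      intro p
      rw [Matrix.conjTranspose_apply, Complex.star_def, Complex.mul_conj]
    simp_rw [h2] at this
    rw [Matrix.one_apply_eq] at this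
    exact_mod_cast (by push_cast at this ⊢; exact this : ((∑ p, Complex.normSq (N k p) : ℝ) : ℂ) = 1)
  have hcol : ∀ p, ∑ k, Complex.normSq (N k p) = 1 := by
    intro p
    have := congrFun (congrFun hN1 p) p
    rw [Matrix.mul_apply] at this
    have h2 : ∀ k, Nᴴ p k * N k p = (Complex.normSq (N k p) : ℂ) := by
      intro k
      rw [Matrix.conjTranspose_apply, mul_comm, Complex.star_def, Complex.mul_conj]
    simp_rw [h2] at this
    rw [Matrix.one_apply_eq] at this
    exact_mod_cast (by push_cast at this ⊢; exact this : ((∑ k, Complex.normSq (N k p) : ℝ) : ℂ) = 1)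
  -- e = |N|² d  (diagonal of N diag(d) Nᴴ)
  have hdiagE : Matrix.diagonal (RCLike.ofReal ∘ hher.eigenvalues)
      = N * Matrix.diagonal (fun p => (d p : ℂ)) * Nᴴ := by
    have h1 := hher.conjStarAlgAut_star_eigenvectorUnitary
    rw [Unitary.conjStarAlgAut_star_apply] at h1
    rw [← h1, Matrix.star_eq_conjTranspose, ← hW]
    rw [hρ, hN, Matrix.conjTranspose_mul, Matrix.conjTranspose_conjTranspose]
    simp only [Matrix.mul_assoc]
  have he_eq : ∀ k, hher.eigenvalues k = ∑ p, Complex.normSq (N k p) * d p := by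
    intro k
    have := congrFun (congrFun hdiagE k) k
    rw [aud_conj_diag_entry] at this
    rw [Matrix.diagonal_apply_eq] at this
    simp only [Function.comp_apply] at this
    exact Complex.ofReal_inj.mp this
  -- d = |Nᵀ|² e  (diagonal of Nᴴ diag(e) N)
  have hdiagD : Matrix.diagonal (fun p => (d p : ℂ))
      = Nᴴ * Matrix.diagonal (RCLike.ofReal ∘ hher.eigenvalues) * N := by
    have hassoc : Nᴴ * (N * Matrix.diagonal (fun p => (d p : ℂ)) * Nᴴ) * N
        = (Nᴴ * N) * Matrix.diagonal (fun p => (d p : ℂ)) * (Nᴴ * N) := by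
      simp only [Matrix.mul_assoc]
    rw [hdiagE, hassoc, hN1, Matrix.one_mul, Matrix.mul_one]
  have hd_eq : ∀ p, d p = ∑ k, Complex.normSq (N k p) * hher.eigenvalues k := by
    intro p
    have h3 : Matrix.diagonal (fun p => (d p : ℂ))
        = Nᴴ * Matrix.diagonal (fun k => ((hher.eigenvalues k : ℝ) : ℂ)) * (Nᴴ)ᴴ := by
      rw [Matrix.conjTranspose_conjTranspose]
      have hco : (RCLike.ofReal ∘ hher.eigenvalues : n → ℂ)
          = fun k => ((hher.eigenvalues k : ℝ) : ℂ) := rfl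
      rw [← hco]
      exact hdiagD
    have := congrFun (congrFun h3 p) p
    rw [aud_conj_diag_entry] at this
    rw [Matrix.diagonal_apply_eq] at this
    have h4 : ∀ k, Complex.normSq (Nᴴ p k) = Complex.normSq (N k p) := by
      intro k
      simp [Matrix.conjTranspose_apply, Complex.star_def, Complex.normSq_conj]
    simp_rw [h4] at this
    exact_mod_cast this
  -- double Jensen
  have hBnn : ∀ k p, 0 ≤ Complex.normSq (N k p) := fun k p => Complex.normSq_nonneg _
  have h1 : ∑ k, hher.eigenvalues k ^ α ≤ ∑ p, d p ^ α := by
    have := aud_jensen_rpow hα (fun k p => Complex.normSq (N k p)) hBnn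
      hrow (fun p => le_of_eq (hcol p)) d hd
    simpa [← he_eq] using this
  have h2 : ∑ p, d p ^ α ≤ ∑ k, hher.eigenvalues k ^ α := by
    have := aud_jensen_rpow hα (fun p k => Complex.normSq (N k p)) (fun p k => hBnn k p)
      hcol (fun k => le_of_eq (hrow k)) hher.eigenvalues he0
    simpa [← hd_eq] using this
  linarith


variable {dA dB : ℕ}

lemma aud_unit_delta {m : ℕ} {V : Matrix (Fin m) (Fin m) ℂ} (hV : V * Vᴴ = 1)
    (b1 b2 : Fin m) :
    ∑ b, (starRingEnd ℂ) (V b1 b) * V b2 b = if b1 = b2 then 1 else 0 := by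
  have h2 : ∑ b, (starRingEnd ℂ) (V b1 b) * V b2 b = (starRingEnd ℂ) ((V * Vᴴ) b1 b2) := by
    rw [Matrix.mul_apply, map_sum]
    refine Finset.sum_congr rfl fun b _ => ?_
    rw [Matrix.conjTranspose_apply, _root_.map_mul, Complex.star_def, Complex.conj_conj]
  rw [h2, hV, Matrix.one_apply]
  split <;> simp

lemma aud_margA_conj (ρ : Matrix (Fin dA × Fin dB) (Fin dA × Fin dB) ℂ)
    (U : Matrix (Fin dA) (Fin dA) ℂ) (V : Matrix (Fin dB) (Fin dB) ℂ)
    (hV : V * Vᴴ = 1) :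
    margA ((U ⊗ₖ V)ᴴ * ρ * (U ⊗ₖ V)) = Uᴴ * margA ρ * U := by
  funext a a'
  have step1 : margA ((U ⊗ₖ V)ᴴ * ρ * (U ⊗ₖ V)) a a'
      = ∑ b, ∑ j : Fin dA × Fin dB, ∑ i : Fin dA × Fin dB,
          (starRingEnd ℂ) (U i.1 a * V i.2 b) * ρ i j * (U j.1 a' * V j.2 b) := by
    simp only [margA, Matrix.mul_apply, Matrix.conjTranspose_apply, Finset.sum_mul,
      kroneckerMap_apply, Complex.star_def]
  rw [step1]
  have swap1 : ∑ b, ∑ j : Fin dA × Fin dB, ∑ i : Fin dA × Fin dB,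
          (starRingEnd ℂ) (U i.1 a * V i.2 b) * ρ i j * (U j.1 a' * V j.2 b)
      = ∑ i : Fin dA × Fin dB, ∑ j : Fin dA × Fin dB, ∑ b,
          (starRingEnd ℂ) (U i.1 a * V i.2 b) * ρ i j * (U j.1 a' * V j.2 b) := by
    calc ∑ b, ∑ j : Fin dA × Fin dB, ∑ i : Fin dA × Fin dB,
          (starRingEnd ℂ) (U i.1 a * V i.2 b) * ρ i j * (U j.1 a' * V j.2 b)
        = ∑ j : Fin dA × Fin dB, ∑ b, ∑ i : Fin dA × Fin dB,
          (starRingEnd ℂ) (U i.1 a * V i.2 b) * ρ i j * (U j.1 a' * V j.2 b) :=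
          Finset.sum_comm
      _ = ∑ j : Fin dA × Fin dB, ∑ i : Fin dA × Fin dB, ∑ b,
          (starRingEnd ℂ) (U i.1 a * V i.2 b) * ρ i j * (U j.1 a' * V j.2 b) :=
          Finset.sum_congr rfl fun j _ => Finset.sum_comm
      _ = ∑ i : Fin dA × Fin dB, ∑ j : Fin dA × Fin dB, ∑ b,
          (starRingEnd ℂ) (U i.1 a * V i.2 b) * ρ i j * (U j.1 a' * V j.2 b) :=
          Finset.sum_comm
  rw [swap1]
  have step2 : ∀ i : Fin dA × Fin dB, ∀ j : Fin dA × Fin dB,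
      ∑ b, (starRingEnd ℂ) (U i.1 a * V i.2 b) * ρ i j * (U j.1 a' * V j.2 b)
      = (if i.2 = j.2 then (1:ℂ) else 0) *
          ((starRingEnd ℂ) (U i.1 a) * ρ i j * U j.1 a') := by
    intro i j
    have hterm : ∀ b, (starRingEnd ℂ) (U i.1 a * V i.2 b) * ρ i j * (U j.1 a' * V j.2 b)
        = ((starRingEnd ℂ) (V i.2 b) * V j.2 b) *
          ((starRingEnd ℂ) (U i.1 a) * ρ i j * U j.1 a') := by
      intro b; rw [_root_.map_mul]; ring
    simp_rw [hterm, ← Finset.sum_mul, aud_unit_delta hV]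
  simp_rw [step2]
  have step3 : ∀ i : Fin dA × Fin dB,
      ∑ j : Fin dA × Fin dB, (if i.2 = j.2 then (1:ℂ) else 0) *
          ((starRingEnd ℂ) (U i.1 a) * ρ i j * U j.1 a')
      = ∑ j1, (starRingEnd ℂ) (U i.1 a) * ρ i (j1, i.2) * U j1 a' := by
    intro i
    rw [Fintype.sum_prod_type]
    refine Finset.sum_congr rfl fun j1 _ => ?_
    simp [ite_mul, Finset.sum_ite_eq]
  simp_rw [step3]
  have rhs : (Uᴴ * margA ρ * U) a a'
      = ∑ j1, ∑ i1, ∑ b1, (starRingEnd ℂ) (U i1 a) * ρ (i1,b1) (j1,b1) * U j1 a' := by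
    simp only [Matrix.mul_apply, Matrix.conjTranspose_apply, margA, Complex.star_def,
      Finset.sum_mul, Finset.mul_sum]
  rw [rhs, Fintype.sum_prod_type]
  calc ∑ i1 : Fin dA, ∑ b1 : Fin dB, ∑ j1 : Fin dA,
        (starRingEnd ℂ) (U (i1,b1).1 a) * ρ (i1,b1) (j1,(i1,b1).2) * U j1 a'
      = ∑ i1 : Fin dA, ∑ j1 : Fin dA, ∑ b1 : Fin dB,
        (starRingEnd ℂ) (U i1 a) * ρ (i1,b1) (j1,b1) * U j1 a' :=
        Finset.sum_congr rfl fun i1 _ => Finset.sum_comm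
    _ = ∑ j1 : Fin dA, ∑ i1 : Fin dA, ∑ b1 : Fin dB,
        (starRingEnd ℂ) (U i1 a) * ρ (i1,b1) (j1,b1) * U j1 a' :=
        Finset.sum_comm

lemma aud_margB_conj (ρ : Matrix (Fin dA × Fin dB) (Fin dA × Fin dB) ℂ)
    (U : Matrix (Fin dA) (Fin dA) ℂ) (V : Matrix (Fin dB) (Fin dB) ℂ)
    (hU : U * Uᴴ = 1) :
    margB ((U ⊗ₖ V)ᴴ * ρ * (U ⊗ₖ V)) = Vᴴ * margB ρ * V := by
  funext b b'
  have step1 : margB ((U ⊗ₖ V)ᴴ * ρ * (U ⊗ₖ V)) b b'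
      = ∑ a, ∑ j : Fin dA × Fin dB, ∑ i : Fin dA × Fin dB,
          (starRingEnd ℂ) (U i.1 a * V i.2 b) * ρ i j * (U j.1 a * V j.2 b') := by
    simp only [margB, Matrix.mul_apply, Matrix.conjTranspose_apply, Finset.sum_mul,
      kroneckerMap_apply, Complex.star_def]
  rw [step1]
  have swap1 : ∑ a, ∑ j : Fin dA × Fin dB, ∑ i : Fin dA × Fin dB,
          (starRingEnd ℂ) (U i.1 a * V i.2 b) * ρ i j * (U j.1 a * V j.2 b')
      = ∑ i : Fin dA × Fin dB, ∑ j : Fin dA × Fin dB, ∑ a,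
          (starRingEnd ℂ) (U i.1 a * V i.2 b) * ρ i j * (U j.1 a * V j.2 b') := by
    calc ∑ a, ∑ j : Fin dA × Fin dB, ∑ i : Fin dA × Fin dB,
          (starRingEnd ℂ) (U i.1 a * V i.2 b) * ρ i j * (U j.1 a * V j.2 b')
        = ∑ j : Fin dA × Fin dB, ∑ a, ∑ i : Fin dA × Fin dB,
          (starRingEnd ℂ) (U i.1 a * V i.2 b) * ρ i j * (U j.1 a * V j.2 b') :=
          Finset.sum_comm
      _ = ∑ j : Fin dA × Fin dB, ∑ i : Fin dA × Fin dB, ∑ a,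
          (starRingEnd ℂ) (U i.1 a * V i.2 b) * ρ i j * (U j.1 a * V j.2 b') :=
          Finset.sum_congr rfl fun j _ => Finset.sum_comm
      _ = ∑ i : Fin dA × Fin dB, ∑ j : Fin dA × Fin dB, ∑ a,
          (starRingEnd ℂ) (U i.1 a * V i.2 b) * ρ i j * (U j.1 a * V j.2 b') :=
          Finset.sum_comm
  rw [swap1]
  have step2 : ∀ i : Fin dA × Fin dB, ∀ j : Fin dA × Fin dB,
      ∑ a, (starRingEnd ℂ) (U i.1 a * V i.2 b) * ρ i j * (U j.1 a * V j.2 b')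
      = (if i.1 = j.1 then (1:ℂ) else 0) *
          ((starRingEnd ℂ) (V i.2 b) * ρ i j * V j.2 b') := by
    intro i j
    have hterm : ∀ a, (starRingEnd ℂ) (U i.1 a * V i.2 b) * ρ i j * (U j.1 a * V j.2 b')
        = ((starRingEnd ℂ) (U i.1 a) * U j.1 a) *
          ((starRingEnd ℂ) (V i.2 b) * ρ i j * V j.2 b') := by
      intro a; rw [_root_.map_mul]; ring
    simp_rw [hterm, ← Finset.sum_mul, aud_unit_delta hU]
  simp_rw [step2]
  have step3 : ∀ i : Fin dA × Fin dB,
      ∑ j : Fin dA × Fin dB, (if i.1 = j.1 then (1:ℂ) else 0) *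
          ((starRingEnd ℂ) (V i.2 b) * ρ i j * V j.2 b')
      = ∑ j2, (starRingEnd ℂ) (V i.2 b) * ρ i (i.1, j2) * V j2 b' := by
    intro i
    rw [Fintype.sum_prod_type]
    rw [Finset.sum_comm]
    refine Finset.sum_congr rfl fun j2 _ => ?_
    simp [ite_mul, Finset.sum_ite_eq]
  simp_rw [step3]
  have rhs : (Vᴴ * margB ρ * V) b b'
      = ∑ j2, ∑ i2, ∑ a, (starRingEnd ℂ) (V i2 b) * ρ (a,i2) (a,j2) * V j2 b' := by
    simp only [Matrix.mul_apply, Matrix.conjTranspose_apply, margB, Complex.star_def,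
      Finset.sum_mul, Finset.mul_sum]
  rw [rhs, Fintype.sum_prod_type]
  calc ∑ i1 : Fin dA, ∑ i2 : Fin dB, ∑ j2 : Fin dB,
        (starRingEnd ℂ) (V (i1,i2).2 b) * ρ (i1,i2) ((i1,i2).1, j2) * V j2 b'
      = ∑ i2 : Fin dB, ∑ i1 : Fin dA, ∑ j2 : Fin dB,
        (starRingEnd ℂ) (V i2 b) * ρ (i1,i2) (i1, j2) * V j2 b' :=
        Finset.sum_comm
    _ = ∑ i2 : Fin dB, ∑ j2 : Fin dB, ∑ i1 : Fin dA,
        (starRingEnd ℂ) (V i2 b) * ρ (i1,i2) (i1, j2) * V j2 b' :=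
        Finset.sum_congr rfl fun i2 _ => Finset.sum_comm
    _ = ∑ j2 : Fin dB, ∑ i2 : Fin dB, ∑ i1 : Fin dA,
        (starRingEnd ℂ) (V i2 b) * ρ (i1,i2) (i1, j2) * V j2 b' :=
        Finset.sum_comm


lemma aud_kron_conjTranspose (U : Matrix (Fin dA) (Fin dA) ℂ) (V : Matrix (Fin dB) (Fin dB) ℂ) :
    (U ⊗ₖ V)ᴴ = Uᴴ ⊗ₖ Vᴴ := by
  funext p q
  simp [Matrix.conjTranspose_apply, kroneckerMap_apply, mul_comm]

lemma aud_kron_unitary {U : Matrix (Fin dA) (Fin dA) ℂ} {V : Matrix (Fin dB) (Fin dB) ℂ}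
    (hU : Uᴴ * U = 1) (hV : Vᴴ * V = 1) : (U ⊗ₖ V)ᴴ * (U ⊗ₖ V) = 1 := by
  rw [aud_kron_conjTranspose, ← Matrix.mul_kronecker_mul, hU, hV, Matrix.one_kronecker_one]

lemma aud_psd_sum {n m : Type*} [Fintype m] [Fintype n] (f : m → Matrix n n ℂ)
    (h : ∀ b, (f b).PosSemidef) : (∑ b, f b).PosSemidef :=
  Finset.sum_induction f Matrix.PosSemidef (fun _ _ ha hb => ha.add hb)
    Matrix.PosSemidef.zero (fun b _ => h b)

lemma aud_margA_eq_sum (ρ : Matrix (Fin dA × Fin dB) (Fin dA × Fin dB) ℂ) :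
    margA ρ = ∑ b, (Matrix.of fun (p : Fin dA × Fin dB) (a : Fin dA) => if p = (a, b) then (1:ℂ) else 0)ᴴ
      * ρ * (Matrix.of fun (p : Fin dA × Fin dB) (a : Fin dA) => if p = (a, b) then (1:ℂ) else 0) := by
  funext a a'
  rw [Matrix.sum_apply]
  refine Finset.sum_congr rfl fun b _ => ?_
  rw [Matrix.mul_apply]
  rw [Finset.sum_eq_single ((a', b) : Fin dA × Fin dB) ?h1 ?h2]
  · rw [Matrix.mul_apply]
    rw [Finset.sum_eq_single ((a, b) : Fin dA × Fin dB) ?h3 ?h4]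
    · simp [Matrix.conjTranspose_apply]
    · intro q _ hq
      simp [Matrix.conjTranspose_apply, Matrix.of_apply, hq]
    · simp
  · intro q _ hq
    simp [hq]
  · simp

lemma aud_margB_eq_sum (ρ : Matrix (Fin dA × Fin dB) (Fin dA × Fin dB) ℂ) :
    margB ρ = ∑ a, (Matrix.of fun (p : Fin dA × Fin dB) (b : Fin dB) => if p = (a, b) then (1:ℂ) else 0)ᴴ
      * ρ * (Matrix.of fun (p : Fin dA × Fin dB) (b : Fin dB) => if p = (a, b) then (1:ℂ) else 0) := by
  funext b b'
  rw [Matrix.sum_apply]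
  refine Finset.sum_congr rfl fun a _ => ?_
  rw [Matrix.mul_apply]
  rw [Finset.sum_eq_single ((a, b') : Fin dA × Fin dB) ?h1 ?h2]
  · rw [Matrix.mul_apply]
    rw [Finset.sum_eq_single ((a, b) : Fin dA × Fin dB) ?h3 ?h4]
    · simp [Matrix.conjTranspose_apply]
    · intro q _ hq
      simp [Matrix.conjTranspose_apply, Matrix.of_apply, hq]
    · simp
  · intro q _ hq
    simp [hq]
  · simp

lemma aud_margA_psd {ρ : Matrix (Fin dA × Fin dB) (Fin dA × Fin dB) ℂ}
    (h : ρ.PosSemidef) : (margA ρ).PosSemidef := by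
  rw [aud_margA_eq_sum]
  exact aud_psd_sum _ fun b => h.conjTranspose_mul_mul_same _

lemma aud_margB_psd {ρ : Matrix (Fin dA × Fin dB) (Fin dA × Fin dB) ℂ}
    (h : ρ.PosSemidef) : (margB ρ).PosSemidef := by
  rw [aud_margB_eq_sum]
  exact aud_psd_sum _ fun a => h.conjTranspose_mul_mul_same _

lemma aud_margA_trace (ρ : Matrix (Fin dA × Fin dB) (Fin dA × Fin dB) ℂ) :
    (margA ρ).trace = ρ.trace := by
  rw [Matrix.trace, Matrix.trace, Fintype.sum_prod_type]
  rfl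

lemma aud_margB_trace (ρ : Matrix (Fin dA × Fin dB) (Fin dA × Fin dB) ℂ) :
    (margB ρ).trace = ρ.trace := by
  rw [Matrix.trace, Matrix.trace, Fintype.sum_prod_type]
  rw [Finset.sum_comm]
  rfl

lemma aud_others_zero {C : Type*} [Fintype C] [DecidableEq C] (f : C → ℝ)
    (h0 : ∀ c, 0 ≤ f c) (h1 : ∑ c, f c = 1) {c0 : C} (hc0 : f c0 = 1) :
    ∀ c ≠ c0, f c = 0 := by
  have h4 : ∑ c ∈ univ.erase c0, f c = 0 := by
    have h5 : ∑ c ∈ univ.erase c0, f c = (∑ c, f c) - f c0 :=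
      Finset.sum_erase_eq_sub (mem_univ c0)
    rw [h5, h1, hc0]; ring
  intro c hc
  exact (Finset.sum_eq_zero_iff_of_nonneg (fun i _ => h0 i)).1 h4 c (by simp [hc])

lemma aud_rank_one_iff {m : ℕ} {σ : Matrix (Fin m) (Fin m) ℂ} (hσ : σ.IsHermitian)
    (h0 : ∀ i, 0 ≤ hσ.eigenvalues i) (h1 : ∑ i, hσ.eigenvalues i = 1) :
    σ.rank = 1 ↔ ∃ i, hσ.eigenvalues i = 1 := by
  rw [hσ.rank_eq_card_non_zero_eigs]
  constructor
  · intro hcard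
    obtain ⟨x, hx⟩ := Fintype.card_eq_one_iff.mp hcard
    refine ⟨x.1, ?_⟩
    have hz : ∀ j ≠ x.1, hσ.eigenvalues j = 0 := by
      intro j hj
      by_contra h
      exact hj (congrArg Subtype.val (hx ⟨j, h⟩))
    have h4 : ∑ j ∈ univ.erase x.1, hσ.eigenvalues j = 0 :=
      Finset.sum_eq_zero fun j hj => hz j (Finset.ne_of_mem_erase hj)
    have h5 : ∑ j ∈ univ.erase x.1, hσ.eigenvalues j = (∑ j, hσ.eigenvalues j) - hσ.eigenvalues x.1 :=
      Finset.sum_erase_eq_sub (mem_univ x.1)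
    rw [h4, h1] at h5
    linarith
  · rintro ⟨i, hi⟩
    have hz := aud_others_zero hσ.eigenvalues h0 h1 hi
    rw [Fintype.card_eq_one_iff]
    refine ⟨⟨i, by rw [hi]; exact one_ne_zero⟩, fun y => Subtype.ext ?_⟩
    by_contra h
    exact y.2 (hz y.1 h)

end Mat
end AudHelpers

/-- Equality case in Audenaert's inequality: equality holds if and only if
one of the marginals is pure (has rank one). -/
theorem audenaert_equality_iff {dA dB : ℕ} (α : ℝ) (hα : 1 < α)
    (ρ : Matrix (Fin dA × Fin dB) (Fin dA × Fin dB) ℂ) (hρ : IsDensityMatrix ρ) :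
    schattenNorm α (margA ρ) + schattenNorm α (margB ρ) = 1 + schattenNorm α ρ
      ↔ (margA ρ).rank = 1 ∨ (margB ρ).rank = 1 := by
  classical
  open Matrix Finset in
  obtain ⟨hpsd, htr⟩ := hρ
  have hα0 : (0:ℝ) < α := lt_trans one_pos hα
  have hαne : α ≠ 0 := ne_of_gt hα0
  have hA : (margA ρ).PosSemidef := aud_margA_psd hpsd
  have hB : (margB ρ).PosSemidef := aud_margB_psd hpsd
  have hAh : (margA ρ).IsHermitian := hA.1
  have hBh : (margB ρ).IsHermitian := hB.1
  have hh : ρ.IsHermitian := hpsd.1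
  set lam : Fin dA → ℝ := hAh.eigenvalues with hlamdef
  set mu : Fin dB → ℝ := hBh.eigenvalues with hmudef
  set ev : Fin dA × Fin dB → ℝ := hh.eigenvalues with hevdef
  have hlam0 : ∀ a, 0 ≤ lam a := fun a => hA.eigenvalues_nonneg a
  have hmu0 : ∀ b, 0 ≤ mu b := fun b => hB.eigenvalues_nonneg b
  have hev0 : ∀ k, 0 ≤ ev k := fun k => hpsd.eigenvalues_nonneg k
  have hsumlam : ∑ a, lam a = 1 := by
    have h1 : ((∑ a, lam a : ℝ) : ℂ) = ((1:ℝ) : ℂ) := by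
      push_cast
      rw [← aud_trace_eq_sum_eigenvalues hAh, aud_margA_trace, htr]
    exact_mod_cast h1
  have hsummu : ∑ b, mu b = 1 := by
    have h1 : ((∑ b, mu b : ℝ) : ℂ) = ((1:ℝ) : ℂ) := by
      push_cast
      rw [← aud_trace_eq_sum_eigenvalues hBh, aud_margB_trace, htr]
    exact_mod_cast h1
  -- unitaries
  set U : Matrix (Fin dA) (Fin dA) ℂ := (hAh.eigenvectorUnitary : Matrix (Fin dA) (Fin dA) ℂ)
    with hUdef
  set V : Matrix (Fin dB) (Fin dB) ℂ := (hBh.eigenvectorUnitary : Matrix (Fin dB) (Fin dB) ℂ)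
    with hVdef
  set W : Matrix (Fin dA × Fin dB) (Fin dA × Fin dB) ℂ :=
    (hh.eigenvectorUnitary : Matrix (Fin dA × Fin dB) (Fin dA × Fin dB) ℂ) with hWdef
  have hU1 : Uᴴ * U = 1 := by
    rw [hUdef, ← Matrix.star_eq_conjTranspose]
    exact Matrix.mem_unitaryGroup_iff'.mp hAh.eigenvectorUnitary.2
  have hU2 : U * Uᴴ = 1 := by
    rw [hUdef, ← Matrix.star_eq_conjTranspose]
    exact Matrix.mem_unitaryGroup_iff.mp hAh.eigenvectorUnitary.2
  have hV1 : Vᴴ * V = 1 := by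
    rw [hVdef, ← Matrix.star_eq_conjTranspose]
    exact Matrix.mem_unitaryGroup_iff'.mp hBh.eigenvectorUnitary.2
  have hV2 : V * Vᴴ = 1 := by
    rw [hVdef, ← Matrix.star_eq_conjTranspose]
    exact Matrix.mem_unitaryGroup_iff.mp hBh.eigenvectorUnitary.2
  have hW1 : Wᴴ * W = 1 := by
    rw [hWdef, ← Matrix.star_eq_conjTranspose]
    exact Matrix.mem_unitaryGroup_iff'.mp hh.eigenvectorUnitary.2
  have hW2 : W * Wᴴ = 1 := by
    rw [hWdef, ← Matrix.star_eq_conjTranspose]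
    exact Matrix.mem_unitaryGroup_iff.mp hh.eigenvectorUnitary.2
  set X : Matrix (Fin dA × Fin dB) (Fin dA × Fin dB) ℂ := U ⊗ₖ V with hXdef
  have hX1 : Xᴴ * X = 1 := aud_kron_unitary hU1 hV1
  have hX2 : X * Xᴴ = 1 := by
    rw [hXdef, aud_kron_conjTranspose, ← Matrix.mul_kronecker_mul, hU2, hV2,
      Matrix.one_kronecker_one]
  set τ : Matrix (Fin dA × Fin dB) (Fin dA × Fin dB) ℂ := Xᴴ * ρ * X with hτdef
  have hτpsd : τ.PosSemidef := hpsd.conjTranspose_mul_mul_same X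
  have hmargAτ : margA τ = Matrix.diagonal (fun a => ((lam a : ℝ) : ℂ)) := by
    rw [hτdef, hXdef, aud_margA_conj ρ U V hV2]
    have h2 := hAh.conjStarAlgAut_star_eigenvectorUnitary
    rw [Unitary.conjStarAlgAut_star_apply] at h2
    rw [Matrix.star_eq_conjTranspose] at h2
    exact h2
  have hmargBτ : margB τ = Matrix.diagonal (fun b => ((mu b : ℝ) : ℂ)) := by
    rw [hτdef, hXdef, aud_margB_conj ρ U V hU2]
    have h2 := hBh.conjStarAlgAut_star_eigenvectorUnitary
    rw [Unitary.conjStarAlgAut_star_apply] at h2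
    rw [Matrix.star_eq_conjTranspose] at h2
    exact h2
  set d : Fin dA × Fin dB → ℝ := fun p => (τ p p).re with hddef
  have hd0 : ∀ p, 0 ≤ d p := fun p => (aud_psd_diag_nonneg hτpsd p).1
  have hdc : ∀ p, τ p p = ((d p : ℝ) : ℂ) := fun p => (aud_psd_diag_nonneg hτpsd p).2
  have hdlam : ∀ a, ∑ b, d (a, b) = lam a := by
    intro a
    have h1 : margA τ a a = ((lam a : ℝ) : ℂ) := by rw [hmargAτ, Matrix.diagonal_apply_eq]
    have h2 : ((∑ b, d (a, b) : ℝ) : ℂ) = ((lam a : ℝ) : ℂ) := by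
      push_cast
      rw [← h1]
      exact (Finset.sum_congr rfl fun b _ => (hdc (a, b)).symm)
    exact_mod_cast h2
  have hdmu : ∀ b, ∑ a, d (a, b) = mu b := by
    intro b
    have h1 : margB τ b b = ((mu b : ℝ) : ℂ) := by rw [hmargBτ, Matrix.diagonal_apply_eq]
    have h2 : ((∑ a, d (a, b) : ℝ) : ℂ) = ((mu b : ℝ) : ℂ) := by
      push_cast
      rw [← h1]
      exact (Finset.sum_congr rfl fun a _ => (hdc (a, b)).symm)
    exact_mod_cast h2
  -- τ in terms of the eigenbasis of ρ
  set M : Matrix (Fin dA × Fin dB) (Fin dA × Fin dB) ℂ := Xᴴ * W with hMdef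
  have hM1 : Mᴴ * M = 1 := by
    rw [hMdef, Matrix.conjTranspose_mul, Matrix.conjTranspose_conjTranspose]
    calc Wᴴ * X * (Xᴴ * W) = Wᴴ * (X * Xᴴ) * W := by simp only [Matrix.mul_assoc]
      _ = 1 := by rw [hX2, Matrix.mul_one, hW1]
  have hM2 : M * Mᴴ = 1 := by
    rw [hMdef, Matrix.conjTranspose_mul, Matrix.conjTranspose_conjTranspose]
    calc Xᴴ * W * (Wᴴ * X) = Xᴴ * (W * Wᴴ) * X := by simp only [Matrix.mul_assoc]
      _ = 1 := by rw [hW2, Matrix.mul_one, hX1]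
  have hρspec : ρ = W * Matrix.diagonal (fun k => ((ev k : ℝ) : ℂ)) * Wᴴ := by
    have h2 := hh.spectral_theorem
    rw [Unitary.conjStarAlgAut_apply, Matrix.star_eq_conjTranspose] at h2
    exact h2
  have hτeq : τ = M * Matrix.diagonal (fun k => ((ev k : ℝ) : ℂ)) * Mᴴ := by
    rw [hτdef, hρspec, hMdef, Matrix.conjTranspose_mul, Matrix.conjTranspose_conjTranspose]
    simp only [Matrix.mul_assoc]
  have hdM : ∀ p, d p = ∑ k, Complex.normSq (M p k) * ev k := by
    intro p
    have h1 := congrFun (congrFun hτeq p) p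
    rw [aud_conj_diag_entry M ev p] at h1
    rw [hdc p] at h1
    exact_mod_cast h1
  -- Jensen: ∑ d^α ≤ ∑ ev^α
  have hjen : ∑ p, d p ^ α ≤ ∑ k, ev k ^ α := by
    have h1 := aud_jensen_rpow hα.le (fun p k => Complex.normSq (M p k))
      (fun p k => Complex.normSq_nonneg _) (fun p => aud_rowsum hM2 p)
      (fun k => le_of_eq (aud_colsum hM1 k)) ev hev0
    calc ∑ p, d p ^ α = ∑ p, (∑ k, Complex.normSq (M p k) * ev k) ^ α := by
          refine Finset.sum_congr rfl fun p _ => by rw [hdM p]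
      _ ≤ ∑ k, ev k ^ α := h1
  -- schattenNorm unfoldings
  have hSA : schattenNorm α (margA ρ) = (∑ a, lam a ^ α) ^ (1/α) := dif_pos hAh
  have hSB : schattenNorm α (margB ρ) = (∑ b, mu b ^ α) ^ (1/α) := dif_pos hBh
  have hSρ : schattenNorm α ρ = (∑ k, ev k ^ α) ^ (1/α) := dif_pos hh
  constructor
  · -- equality implies purity of a marginal
    intro heq
    rw [hSA, hSB, hSρ] at heq
    have hRle : (∑ p : Fin dA × Fin dB, d (p.1, p.2) ^ α) ^ (1/α)
        ≤ (∑ k, ev k ^ α) ^ (1/α) := by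
      refine Real.rpow_le_rpow (Finset.sum_nonneg fun p _ => Real.rpow_nonneg (hd0 _) _)
        ?_ (by positivity)
      calc ∑ p : Fin dA × Fin dB, d (p.1, p.2) ^ α = ∑ p, d p ^ α := by simp
        _ ≤ ∑ k, ev k ^ α := hjen
    have hR0 : (0:ℝ) ≤ (∑ k, ev k ^ α) ^ (1/α) :=
      Real.rpow_nonneg (Finset.sum_nonneg fun k _ => Real.rpow_nonneg (hev0 k) _) _
    have hcc := aud_comm_core hα (fun a b => d (a, b)) (fun a b => hd0 _)
      hdlam hdmu hsumlam hR0 hRle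
    rcases hcc.2 heq with ⟨a, ha⟩ | ⟨b, hb⟩
    · exact Or.inl ((aud_rank_one_iff hAh hlam0 hsumlam).mpr ⟨a, ha⟩)
    · exact Or.inr ((aud_rank_one_iff hBh hmu0 hsummu).mpr ⟨b, hb⟩)
  · -- purity of a marginal implies equality
    rintro (hr | hr)
    · -- `margA` pure
      obtain ⟨a0, ha0⟩ := (aud_rank_one_iff hAh hlam0 hsumlam).mp hr
      have hz := aud_others_zero lam hlam0 hsumlam ha0
      have hdz : ∀ p : Fin dA × Fin dB, p.1 ≠ a0 → d p = 0 := by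
        rintro ⟨a, b⟩ hne
        have h4 : ∑ b', d (a, b') = 0 := by rw [hdlam a]; exact hz a hne
        exact (Finset.sum_eq_zero_iff_of_nonneg (fun b' _ => hd0 (a, b'))).1 h4 b (mem_univ b)
      have hτdiag : τ = Matrix.diagonal (fun p => ((d p : ℝ) : ℂ)) := by
        funext p q
        obtain ⟨p1, p2⟩ := p
        obtain ⟨q1, q2⟩ := q
        by_cases hpq : ((p1, p2) : Fin dA × Fin dB) = (q1, q2)
        · rw [hpq, Matrix.diagonal_apply_eq]
          exact hdc (q1, q2)
        · rw [Matrix.diagonal_apply_ne _ hpq]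
          by_cases hp1 : p1 = a0
          · by_cases hq1 : q1 = a0
            · rw [hp1, hq1]
              have hbne : p2 ≠ q2 := fun h => hpq (by rw [hp1, hq1, h])
              have h6 : ∑ a, τ (a, p2) (a, q2) = 0 := by
                have h5 : margB τ p2 q2 = 0 := by
                  rw [hmargBτ, Matrix.diagonal_apply_ne _ hbne]
                exact h5
              have h7 : ∀ a ∈ univ.erase a0, τ (a, p2) (a, q2) = 0 := by
                intro a ha
                have hane : a ≠ a0 := Finset.ne_of_mem_erase ha
                have hdiag0 : τ (a, p2) (a, p2) = 0 := by
                  rw [hdc (a, p2), hdz (a, p2) hane]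
                  norm_num
                exact (aud_psd_row_zero hτpsd hdiag0 _).2
              have h8 := Finset.add_sum_erase univ (fun a => τ (a, p2) (a, q2)) (mem_univ a0)
              rw [Finset.sum_eq_zero h7] at h8
              rw [← h8] at h6
              simpa using h6
            · have hdiag0 : τ (q1, q2) (q1, q2) = 0 := by
                rw [hdc (q1, q2), hdz (q1, q2) hq1]
                norm_num
              exact (aud_psd_row_zero hτpsd hdiag0 _).1
          · have hdiag0 : τ (p1, p2) (p1, p2) = 0 := by
              rw [hdc (p1, p2), hdz (p1, p2) hp1]
              norm_num
            exact (aud_psd_row_zero hτpsd hdiag0 _).2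
      have hρdiag : ρ = X * Matrix.diagonal (fun p => ((d p : ℝ) : ℂ)) * Xᴴ := by
        rw [← hτdiag, hτdef]
        symm
        calc X * (Xᴴ * ρ * X) * Xᴴ = (X * Xᴴ) * ρ * (X * Xᴴ) := by
              simp only [Matrix.mul_assoc]
          _ = ρ := by rw [hX2, Matrix.one_mul, Matrix.mul_one]
      have hsum_eq : ∑ k, ev k ^ α = ∑ p, d p ^ α :=
        aud_sum_rpow_eigenvalues hα.le hh X hX1 hX2 d hd0 hρdiag
      have hd_a0 : ∀ b, d (a0, b) = mu b := by
        intro b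
        rw [← hdmu b]
        refine (Finset.sum_eq_single a0 (fun a _ ha => hdz (a, b) ha) (by simp)).symm
      have hsum_d : ∑ p, d p ^ α = ∑ b, mu b ^ α := by
        rw [Fintype.sum_prod_type]
        rw [Finset.sum_eq_single a0 (fun a _ ha => Finset.sum_eq_zero fun b _ => by
          rw [hdz (a, b) ha, Real.zero_rpow hαne]) (by simp)]
        exact Finset.sum_congr rfl fun b _ => by rw [hd_a0 b]
      have hlam_sum : ∑ a, lam a ^ α = 1 := by
        rw [Finset.sum_eq_single a0 (fun a _ ha => by rw [hz a ha, Real.zero_rpow hαne])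
          (by simp), show lam a0 = (1:ℝ) from ha0, Real.one_rpow]
      rw [hSA, hSB, hSρ, hlam_sum, Real.one_rpow,
        show (∑ k, ev k ^ α) = ∑ b, mu b ^ α from hsum_eq.trans hsum_d]
    · -- `margB` pure
      obtain ⟨b0, hb0⟩ := (aud_rank_one_iff hBh hmu0 hsummu).mp hr
      have hz := aud_others_zero mu hmu0 hsummu hb0
      have hdz : ∀ p : Fin dA × Fin dB, p.2 ≠ b0 → d p = 0 := by
        rintro ⟨a, b⟩ hne
        have h4 : ∑ a', d (a', b) = 0 := by rw [hdmu b]; exact hz b hne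
        exact (Finset.sum_eq_zero_iff_of_nonneg (fun a' _ => hd0 (a', b))).1 h4 a (mem_univ a)
      have hτdiag : τ = Matrix.diagonal (fun p => ((d p : ℝ) : ℂ)) := by
        funext p q
        obtain ⟨p1, p2⟩ := p
        obtain ⟨q1, q2⟩ := q
        by_cases hpq : ((p1, p2) : Fin dA × Fin dB) = (q1, q2)
        · rw [hpq, Matrix.diagonal_apply_eq]
          exact hdc (q1, q2)
        · rw [Matrix.diagonal_apply_ne _ hpq]
          by_cases hp2 : p2 = b0
          · by_cases hq2 : q2 = b0
            · rw [hp2, hq2]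
              have hane : p1 ≠ q1 := fun h => hpq (by rw [hp2, hq2, h])
              have h6 : ∑ b, τ (p1, b) (q1, b) = 0 := by
                have h5 : margA τ p1 q1 = 0 := by
                  rw [hmargAτ, Matrix.diagonal_apply_ne _ hane]
                exact h5
              have h7 : ∀ b ∈ univ.erase b0, τ (p1, b) (q1, b) = 0 := by
                intro b hb
                have hbne : b ≠ b0 := Finset.ne_of_mem_erase hb
                have hdiag0 : τ (p1, b) (p1, b) = 0 := by
                  rw [hdc (p1, b), hdz (p1, b) hbne]
                  norm_num
                exact (aud_psd_row_zero hτpsd hdiag0 _).2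
              have h8 := Finset.add_sum_erase univ (fun b => τ (p1, b) (q1, b)) (mem_univ b0)
              rw [Finset.sum_eq_zero h7] at h8
              rw [← h8] at h6
              simpa using h6
            · have hdiag0 : τ (q1, q2) (q1, q2) = 0 := by
                rw [hdc (q1, q2), hdz (q1, q2) hq2]
                norm_num
              exact (aud_psd_row_zero hτpsd hdiag0 _).1
          · have hdiag0 : τ (p1, p2) (p1, p2) = 0 := by
              rw [hdc (p1, p2), hdz (p1, p2) hp2]
              norm_num
            exact (aud_psd_row_zero hτpsd hdiag0 _).2
      have hρdiag : ρ = X * Matrix.diagonal (fun p => ((d p : ℝ) : ℂ)) * Xᴴ := by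
        rw [← hτdiag, hτdef]
        symm
        calc X * (Xᴴ * ρ * X) * Xᴴ = (X * Xᴴ) * ρ * (X * Xᴴ) := by
              simp only [Matrix.mul_assoc]
          _ = ρ := by rw [hX2, Matrix.one_mul, Matrix.mul_one]
      have hsum_eq : ∑ k, ev k ^ α = ∑ p, d p ^ α :=
        aud_sum_rpow_eigenvalues hα.le hh X hX1 hX2 d hd0 hρdiag
      have hd_b0 : ∀ a, d (a, b0) = lam a := by
        intro a
        rw [← hdlam a]
        refine (Finset.sum_eq_single b0 (fun b _ hb => hdz (a, b) hb) (by simp)).symm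
      have hsum_d : ∑ p, d p ^ α = ∑ a, lam a ^ α := by
        rw [Fintype.sum_prod_type]
        refine Finset.sum_congr rfl fun a _ => ?_
        rw [Finset.sum_eq_single b0 (fun b _ hb => by
          rw [hdz (a, b) hb, Real.zero_rpow hαne]) (by simp), hd_b0 a]
      have hmu_sum : ∑ b, mu b ^ α = 1 := by
        rw [Finset.sum_eq_single b0 (fun b _ hb => by rw [hz b hb, Real.zero_rpow hαne])
          (by simp), show mu b0 = (1:ℝ) from hb0, Real.one_rpow]
      rw [hSA, hSB, hSρ, hmu_sum, Real.one_rpow,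
        show (∑ k, ev k ^ α) = ∑ a, lam a ^ α from hsum_eq.trans hsum_d]
      ring

end
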